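/- Probabilistic Controllability and Observability Theorem: Let G be a PDES with controllable events Σc and observable events Σo, and let L be a probabilistic language with L ⊆ L_G. Then there exists a probabilistic P-supervisor S_p such that L_{S_p/G} = L if and only if L is probabilistic controllable w.r.t. L_G and Σc and probabilistic observable w.r.t. L_G, Σc and Σo. -/
import Mathlib


open scoped BigOperators

noncomputable section

/-- Chain product: given step weights `w s σ` (interpreted as the conditional
probability of event `σ` after string `s`), `chainProd w pre rest` multiplies the
weights along `rest`, starting from the already-consumed prefix `pre`. -/
def chainProd {E : Type*} (w : List E → E → ℝ) : List E → List E → ℝ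
  | _, [] => 1
  | pre, σ :: rest => w pre σ * chainProd w (pre ++ [σ]) rest

/-- The (probabilistic) language generated by step weights `w`:
`langOf w [] = 1` and `langOf w (s ++ [σ]) = langOf w s * w s σ`. -/
def langOf {E : Type*} (w : List E → E → ℝ) : List E → ℝ := chainProd w []

/-- A probabilistic language over a finite event set `E`. -/
structure PLang (E : Type*) [Fintype E] where
  toFun : List E → ℝ
  nonneg : ∀ s, 0 ≤ toFun s
  le_one : ∀ s, toFun s ≤ 1
  eps : toFun [] = 1
  step : ∀ s, (∑ σ : E, toFun (s ++ [σ])) ≤ toFun s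

/-- `L1` is a probabilistic sublanguage of `L2`. -/
def PSub {E : Type*} (L1 L2 : List E → ℝ) : Prop :=
  (∀ s, 0 < L1 s → 0 < L2 s) ∧
  ∀ s, 0 < L1 s → ∀ σ : E, L1 (s ++ [σ]) / L1 s ≤ L2 (s ++ [σ]) / L2 s

/-- Intersection of probabilistic languages. -/
def pInter {E : Type*} (L1 L2 : List E → ℝ) : List E → ℝ :=
  langOf fun s σ => min (L1 (s ++ [σ]) / L1 s) (L2 (s ++ [σ]) / L2 s)

/-- Natural projection erasing the events outside the observable set `So`. -/
def proj {E : Type*} [DecidableEq E] (So : Finset E) (s : List E) : List E :=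
  s.filter fun σ => decide (σ ∈ So)

/-- A probabilistic discrete event system (probabilistic automaton). -/
structure PDES (X : Type*) (E : Type*) [Fintype E] where
  x0 : X
  trans : X → E → Option X
  prob : X → E → ℝ
  prob_nonneg : ∀ x σ, 0 ≤ prob x σ
  prob_le_one : ∀ x σ, prob x σ ≤ 1
  prob_pos_iff : ∀ x σ, 0 < prob x σ ↔ (trans x σ).isSome
  sum_le_one : ∀ x, (∑ σ : E, prob x σ) ≤ 1

/-- Extension of the partial transition function to strings. -/
def PDES.transStar {X E : Type*} [Fintype E] (G : PDES X E) (s : List E) : Option X :=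
  s.foldl (fun ox σ => ox.bind fun x => G.trans x σ) (some G.x0)

/-- Step weight of a PDES: `ρ(δ(x0,s),σ)` when `δ(x0,s)` is defined, `0` otherwise. -/
def PDES.w {X E : Type*} [Fintype E] (G : PDES X E) (s : List E) (σ : E) : ℝ :=
  (G.transStar s).elim 0 fun x => G.prob x σ

/-- The probabilistic language generated by a PDES. -/
def PDES.lang {X E : Type*} [Fintype E] (G : PDES X E) : List E → ℝ := langOf G.w

/-- The set of control patterns: subsets of events containing every uncontrollable event. -/
def ControlPatterns {E : Type*} [Fintype E] [DecidableEq E] (Sc : Finset E) :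
    Finset (Finset E) :=
  Finset.univ.filter fun θ => Scᶜ ⊆ θ

/-- `Sp` is a probabilistic P-supervisor for `G`: to every observation of a string in the
support of `L_G` it assigns a probability distribution on the control patterns. -/
def IsSupervisor {X E : Type*} [Fintype E] [DecidableEq E] (G : PDES X E)
    (Sc So : Finset E) (Sp : List E → Finset E → ℝ) : Prop :=
  ∀ s : List E, 0 < G.lang s →
    (∀ θ ∈ ControlPatterns Sc, 0 ≤ Sp (proj So s) θ) ∧
    (∑ θ ∈ ControlPatterns Sc, Sp (proj So s) θ) = 1

/-- The controlled probabilistic language `L_{Sp/G}`. -/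
def supLang {X E : Type*} [Fintype E] [DecidableEq E] (G : PDES X E)
    (Sc So : Finset E) (Sp : List E → Finset E → ℝ) : List E → ℝ :=
  langOf fun s σ =>
    G.w s σ * ∑ θ ∈ (ControlPatterns Sc).filter (fun θ => σ ∈ θ), Sp (proj So s) θ

/-- `K` is a scaling-factor function for `G`: on every observation of a string in the
support of `L_G` it takes values in `[0,1]` and equals `1` on uncontrollable events. -/
def IsScaling {X E : Type*} [Fintype E] [DecidableEq E] (G : PDES X E)
    (Sc So : Finset E) (K : List E → E → ℝ) : Prop :=
  ∀ s : List E, 0 < G.lang s → ∀ σ : E,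
    0 ≤ K (proj So s) σ ∧ K (proj So s) σ ≤ 1 ∧ (σ ∉ Sc → K (proj So s) σ = 1)

/-- The controlled probabilistic language `L_{K/G}`. -/
def kLang {X E : Type*} [Fintype E] [DecidableEq E] (G : PDES X E)
    (So : Finset E) (K : List E → E → ℝ) : List E → ℝ :=
  langOf fun s σ => G.w s σ * K (proj So s) σ

/-- Probabilistic controllability (language form). -/
def ProbControllable {E : Type*} (L M : List E → ℝ) (Sc : Finset E) : Prop :=
  ∀ s : List E, 0 < L s → ∀ σ : E, σ ∉ Sc →
    L (s ++ [σ]) / L s = M (s ++ [σ]) / M s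

/-- Probabilistic observability (language form). -/
def ProbObservable {E : Type*} [DecidableEq E] (L M : List E → ℝ)
    (Sc So : Finset E) : Prop :=
  ∀ s1 s2 : List E, 0 < L s1 → 0 < L s2 → proj So s1 = proj So s2 →
    ∀ σ ∈ Sc,
      (M (s1 ++ [σ]) / M s1) * (L (s2 ++ [σ]) / L s2) =
      (M (s2 ++ [σ]) / M s2) * (L (s1 ++ [σ]) / L s1)

/-- Probabilistic controllability (automata form). -/
def AutControllable {X Q E : Type*} [Fintype E] (G : PDES X E) (H : PDES Q E)
    (Sc : Finset E) : Prop :=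
  ∀ s : List E, 0 < H.lang s → ∀ x q,
    G.transStar s = some x → H.transStar s = some q →
    ∀ σ : E, σ ∉ Sc → H.prob q σ = G.prob x σ

/-- Probabilistic observability (automata form). -/
def AutObservable {X Q E : Type*} [Fintype E] [DecidableEq E] (G : PDES X E)
    (H : PDES Q E) (Sc So : Finset E) : Prop :=
  ∀ s1 s2 : List E, 0 < H.lang s1 → 0 < H.lang s2 → proj So s1 = proj So s2 →
    ∀ x1 q1 x2 q2,
      G.transStar s1 = some x1 → H.transStar s1 = some q1 →
      G.transStar s2 = some x2 → H.transStar s2 = some q2 →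
      ∀ σ ∈ Sc, G.prob x1 σ * H.prob q2 σ = G.prob x2 σ * H.prob q1 σ

/-- Reachability in the controllability-testing automaton `G_tc`.
States are pairs `(x,q)` (as `Sum.inl`) together with the special state `d` (`Sum.inr ()`). -/
inductive TcReach {X Q E : Type*} [Fintype E] (G : PDES X E) (H : PDES Q E)
    (Sc : Finset E) : (X × Q) ⊕ Unit → Prop
  | init : TcReach G H Sc (Sum.inl (G.x0, H.x0))
  | good (x q x' q' σ) : TcReach G H Sc (Sum.inl (x, q)) →
      G.trans x σ = some x' → H.trans q σ = some q' →
      ((σ ∉ Sc ∧ G.prob x σ = H.prob q σ) ∨ σ ∈ Sc) →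
      TcReach G H Sc (Sum.inl (x', q'))
  | bad (x q σ) : TcReach G H Sc (Sum.inl (x, q)) →
      σ ∉ Sc → G.prob x σ ≠ H.prob q σ →
      TcReach G H Sc (Sum.inr ())

/-- Reachability in the observability-testing automaton `G_to`.
States are 4-tuples `(x1,q1,x2,q2)` (as `Sum.inl`) together with the special state `d`. -/
inductive ToReach {X Q E : Type*} [Fintype E] (G : PDES X E) (H : PDES Q E)
    (Sc So : Finset E) : (X × Q × X × Q) ⊕ Unit → Prop
  | init : ToReach G H Sc So (Sum.inl (G.x0, H.x0, G.x0, H.x0))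
  | sync (x1 q1 x2 q2 x1' q1' x2' q2' σ) :
      ToReach G H Sc So (Sum.inl (x1, q1, x2, q2)) →
      G.trans x1 σ = some x1' → H.trans q1 σ = some q1' →
      G.trans x2 σ = some x2' → H.trans q2 σ = some q2' →
      (σ ∉ Sc ∨ (σ ∈ Sc ∧ G.prob x1 σ * H.prob q2 σ = G.prob x2 σ * H.prob q1 σ)) →
      ToReach G H Sc So (Sum.inl (x1', q1', x2', q2'))
  | bad (x1 q1 x2 q2 σ) :
      ToReach G H Sc So (Sum.inl (x1, q1, x2, q2)) →
      σ ∈ Sc → G.prob x1 σ * H.prob q2 σ ≠ G.prob x2 σ * H.prob q1 σ →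
      ToReach G H Sc So (Sum.inr ())
  | left (x1 q1 x2 q2 x1' q1' σ) :
      ToReach G H Sc So (Sum.inl (x1, q1, x2, q2)) → σ ∉ So →
      G.trans x1 σ = some x1' → H.trans q1 σ = some q1' →
      ToReach G H Sc So (Sum.inl (x1', q1', x2, q2))
  | right (x1 q1 x2 q2 x2' q2' σ) :
      ToReach G H Sc So (Sum.inl (x1, q1, x2, q2)) → σ ∉ So →
      G.trans x2 σ = some x2' → H.trans q2 σ = some q2' →
      ToReach G H Sc So (Sum.inl (x1, q1, x2', q2'))

/-- `H` is a probabilistic subautomaton of `G`, as witnessed by the state inclusion `e`. -/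
def SubautomatonVia {Q X E : Type*} [Fintype E] (H : PDES Q E) (G : PDES X E)
    (e : Q → X) : Prop :=
  Function.Injective e ∧ e H.x0 = G.x0 ∧
  ∀ q σ, H.prob q σ ≤ G.prob (e q) σ ∧
    ∀ q', H.trans q σ = some q' → G.trans (e q) σ = some (e q')

/-- The product of two PDESs. -/
def PDES.prod {X Q E : Type*} [Fintype E] (G : PDES X E) (H : PDES Q E) :
    PDES (X × Q) E where
  x0 := (G.x0, H.x0)
  trans := fun p σ => (G.trans p.1 σ).bind fun x => (H.trans p.2 σ).map fun q => (x, q)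
  prob := fun p σ => min (G.prob p.1 σ) (H.prob p.2 σ)
  prob_nonneg := fun p σ => le_min (G.prob_nonneg _ _) (H.prob_nonneg _ _)
  prob_le_one := fun p σ => le_trans (min_le_left _ _) (G.prob_le_one _ _)
  prob_pos_iff := by
    intro p σ
    rw [lt_min_iff, G.prob_pos_iff, H.prob_pos_iff]
    cases hG : G.trans p.1 σ <;> cases hH : H.trans p.2 σ <;> simp [hG, hH]
  sum_le_one := fun p =>
    le_trans (Finset.sum_le_sum fun σ _ => min_le_left _ _) (G.sum_le_one p.1)

end

section AuxLemmas

theorem chainProd_append' {E : Type*} (w : List E → E → ℝ) (s : List E) :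
    ∀ pre t : List E,
      chainProd w pre (s ++ t) = chainProd w pre s * chainProd w (pre ++ s) t := by
  induction s with
  | nil => intro pre t; simp [chainProd]
  | cons σ rest ih =>
    intro pre t
    have hpp : pre ++ σ :: rest = (pre ++ [σ]) ++ rest := by simp
    simp only [List.cons_append, List.append_eq, chainProd, hpp, ih (pre ++ [σ]) t, mul_assoc]

theorem langOf_snoc {E : Type*} (w : List E → E → ℝ) (s : List E) (σ : E) :
    langOf w (s ++ [σ]) = langOf w s * w s σ := by
  unfold langOf
  rw [chainProd_append']
  simp [chainProd]

theorem PLang.snoc_le {E : Type*} [Fintype E] (L : PLang E) (s : List E) (σ : E) :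
    L.toFun (s ++ [σ]) ≤ L.toFun s :=
  le_trans (Finset.single_le_sum (fun i _ => L.nonneg (s ++ [i])) (Finset.mem_univ σ))
    (L.step s)

theorem PDES.w_nonneg {X E : Type*} [Fintype E] (G : PDES X E) (s : List E) (σ : E) :
    0 ≤ G.w s σ := by
  unfold PDES.w
  cases G.transStar s with
  | none => simp
  | some x => exact G.prob_nonneg x σ

theorem PDES.lang_snoc {X E : Type*} [Fintype E] (G : PDES X E) (s : List E) (σ : E) :
    G.lang (s ++ [σ]) = G.lang s * G.w s σ := langOf_snoc _ s σ

open Finset in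
theorem key_sum_filter {E : Type*} [DecidableEq E] (s : Finset E) (a b : E → ℝ)
    (σ0 : E) (h : σ0 ∈ s) :
    ∑ t ∈ s.powerset.filter (fun t => σ0 ∈ t), ((∏ i ∈ t, a i) * ∏ i ∈ s \ t, b i)
      = a σ0 * ∏ i ∈ s.erase σ0, (a i + b i) := by
  set b' := Function.update b σ0 0 with hb'
  have h1 : ∏ i ∈ s, (a i + b' i) = a σ0 * ∏ i ∈ s.erase σ0, (a i + b i) := by
    rw [← Finset.mul_prod_erase s _ h]
    congr 1
    · simp [hb', Function.update_self]
    · exact Finset.prod_congr rfl fun i hi => by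
        simp [hb', Function.update_of_ne (Finset.ne_of_mem_erase hi)]
  rw [← h1, Finset.prod_add]
  rw [← Finset.sum_filter_add_sum_filter_not s.powerset (fun t => σ0 ∈ t)]
  have h2 : ∑ t ∈ s.powerset.filter (fun t => ¬ σ0 ∈ t),
      ((∏ i ∈ t, a i) * ∏ i ∈ s \ t, b' i) = 0 := by
    apply Finset.sum_eq_zero
    intro t ht
    simp only [Finset.mem_filter, Finset.mem_powerset] at ht
    have : σ0 ∈ s \ t := Finset.mem_sdiff.2 ⟨h, ht.2⟩
    rw [Finset.prod_eq_zero this (by simp [hb'])]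
    ring
  rw [h2, add_zero]
  apply Finset.sum_congr rfl
  intro t ht
  simp only [Finset.mem_filter, Finset.mem_powerset] at ht
  congr 1
  exact Finset.prod_congr rfl fun i hi => by
    have : i ≠ σ0 := fun he => (Finset.mem_sdiff.1 hi).2 (he ▸ ht.2)
    simp [hb', Function.update_of_ne this]

theorem prod_ite_mem_eq {E : Type*} [Fintype E] [DecidableEq E] (K : E → ℝ) (θ : Finset E) :
    ∏ i : E, (if i ∈ θ then K i else 1 - K i)
      = (∏ i ∈ θ, K i) * ∏ i ∈ Finset.univ \ θ, (1 - K i) := by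
  rw [Finset.prod_ite]
  congr 1
  · congr 1; ext i; simp
  · congr 1; ext i; simp

theorem sum_prodIte {E : Type*} [Fintype E] [DecidableEq E] (K : E → ℝ) :
    ∑ θ : Finset E, ∏ i : E, (if i ∈ θ then K i else 1 - K i) = 1 := by
  rw [Finset.sum_congr rfl fun θ _ => prod_ite_mem_eq K θ, ← Finset.powerset_univ,
    ← Finset.prod_add]
  simp

theorem sum_prodIte_filter {E : Type*} [Fintype E] [DecidableEq E] (K : E → ℝ) (σ0 : E) :
    ∑ θ ∈ Finset.univ.filter (fun θ : Finset E => σ0 ∈ θ),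
        ∏ i : E, (if i ∈ θ then K i else 1 - K i) = K σ0 := by
  rw [Finset.sum_congr rfl fun θ _ => prod_ite_mem_eq K θ, ← Finset.powerset_univ,
    key_sum_filter _ _ _ _ (Finset.mem_univ σ0)]
  simp

open Classical in
/-- Scaling factors extracted from `L` by choosing, for each observation, a witness
string in the support of `L` after which the event has positive `G`-probability. -/
noncomputable def myK {X E : Type*} [Fintype E] [DecidableEq E] (G : PDES X E)
    (Sc So : Finset E) (L : PLang E) : List E → E → ℝ := fun t σ =>
  if σ ∈ Sc then
    (if h : ∃ s, 0 < L.toFun s ∧ proj So s = t ∧ 0 < G.w s σ then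
      L.toFun (h.choose ++ [σ]) / L.toFun h.choose / G.w h.choose σ
    else 1)
  else 1

/-- The product-form supervisor induced by scaling factors `myK`. -/
noncomputable def mySp {X E : Type*} [Fintype E] [DecidableEq E] (G : PDES X E)
    (Sc So : Finset E) (L : PLang E) : List E → Finset E → ℝ := fun t θ =>
  ∏ i : E, (if i ∈ θ then myK G Sc So L t i else 1 - myK G Sc So L t i)

end AuxLemmas

/-- Probabilistic Controllability and Observability Theorem. -/
theorem supervisor_exists_iff_controllable_observable {X E : Type*} [Fintype E]
    [DecidableEq E] (G : PDES X E) (Sc So : Finset E) (L : PLang E)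
    (hsub : PSub L.toFun G.lang) :
    (∃ Sp : List E → Finset E → ℝ,
        IsSupervisor G Sc So Sp ∧ supLang G Sc So Sp = L.toFun) ↔
    (ProbControllable L.toFun G.lang Sc ∧ ProbObservable L.toFun G.lang Sc So) := by
  classical
  obtain ⟨hsupp, hrat⟩ := hsub
  have hratio : ∀ s, 0 < L.toFun s → ∀ σ : E,
      L.toFun (s ++ [σ]) / L.toFun s ≤ G.w s σ := by
    intro s hs σ
    have h := hrat s hs σ
    rwa [PDES.lang_snoc, mul_div_cancel_left₀ _ (hsupp s hs).ne'] at h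
  have hLzero : ∀ s (σ : E), L.toFun s = 0 → L.toFun (s ++ [σ]) = 0 := by
    intro s σ h
    have h1 := PLang.snoc_le L s σ
    have h2 := L.nonneg (s ++ [σ])
    linarith
  constructor
  · rintro ⟨Sp, hSp, heq⟩
    have hstep : ∀ s (σ : E), L.toFun (s ++ [σ]) = L.toFun s *
        (G.w s σ * ∑ θ ∈ (ControlPatterns Sc).filter (fun θ => σ ∈ θ),
          Sp (proj So s) θ) := by
      intro s σ
      rw [← heq]
      exact langOf_snoc _ s σ
    constructor
    · intro s hs σ hσ
      have hM := hsupp s hs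
      have hall : (ControlPatterns Sc).filter (fun θ => σ ∈ θ) = ControlPatterns Sc := by
        apply Finset.filter_true_of_mem
        intro θ hθ
        simp only [ControlPatterns, Finset.mem_filter] at hθ
        exact hθ.2 (Finset.mem_compl.2 hσ)
      rw [hstep s σ, hall, (hSp s hM).2, mul_one, PDES.lang_snoc,
        mul_div_cancel_left₀ _ hs.ne', mul_div_cancel_left₀ _ hM.ne']
    · intro s1 s2 h1 h2 hproj σ _
      have hM1 := hsupp s1 h1
      have hM2 := hsupp s2 h2
      rw [hstep s1 σ, hstep s2 σ, PDES.lang_snoc, PDES.lang_snoc, hproj,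
        mul_div_cancel_left₀ _ h1.ne', mul_div_cancel_left₀ _ h2.ne',
        mul_div_cancel_left₀ _ hM1.ne', mul_div_cancel_left₀ _ hM2.ne']
      ring
  · rintro ⟨hctrl, hobs⟩
    have hK01 : ∀ t (σ : E), 0 ≤ myK G Sc So L t σ ∧ myK G Sc So L t σ ≤ 1 := by
      intro t σ
      unfold myK
      split_ifs with h1 h2
      · obtain ⟨hs, hp, hw⟩ := h2.choose_spec
        refine ⟨div_nonneg (div_nonneg (L.nonneg _) hs.le) hw.le, ?_⟩
        rw [div_le_one hw]
        exact hratio _ hs σ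
      · exact ⟨zero_le_one, le_refl 1⟩
      · exact ⟨zero_le_one, le_refl 1⟩
    have hSp_nonneg : ∀ t θ, 0 ≤ mySp G Sc So L t θ := by
      intro t θ
      apply Finset.prod_nonneg
      intro i _
      by_cases hi : i ∈ θ
      · simp only [if_pos hi]; exact (hK01 t i).1
      · simp only [if_neg hi]; linarith [(hK01 t i).2]
    have hSp_zero : ∀ t θ, θ ∉ ControlPatterns Sc → mySp G Sc So L t θ = 0 := by
      intro t θ hθ
      simp only [ControlPatterns, Finset.mem_filter, Finset.mem_univ, true_and] at hθ
      rw [Finset.not_subset] at hθ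
      obtain ⟨i, hi1, hi2⟩ := hθ
      have hiSc : i ∉ Sc := Finset.mem_compl.1 hi1
      apply Finset.prod_eq_zero (Finset.mem_univ i)
      rw [if_neg hi2]
      simp [myK, hiSc]
    have hSp_sum : ∀ t, ∑ θ ∈ ControlPatterns Sc, mySp G Sc So L t θ = 1 := by
      intro t
      rw [Finset.sum_subset (Finset.subset_univ _)
        (fun θ _ hθ => hSp_zero t θ hθ)]
      exact sum_prodIte _
    have hSp_fsum : ∀ t (σ : E),
        ∑ θ ∈ (ControlPatterns Sc).filter (fun θ => σ ∈ θ), mySp G Sc So L t θ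
          = myK G Sc So L t σ := by
      intro t σ
      rw [Finset.sum_subset
        (Finset.monotone_filter_left _ (Finset.subset_univ (ControlPatterns Sc)))]
      · exact sum_prodIte_filter _ σ
      · intro θ hθ hθ'
        simp only [Finset.mem_filter] at hθ hθ'
        exact hSp_zero t θ fun h => hθ' ⟨h, hθ.2⟩
    refine ⟨mySp G Sc So L, fun s _ => ⟨fun θ _ => hSp_nonneg _ θ, hSp_sum _⟩, ?_⟩
    funext s
    induction s using List.reverseRecOn with
    | nil => rw [L.eps]; rfl
    | append_singleton s σ ih =>
      have hsnoc : supLang G Sc So (mySp G Sc So L) (s ++ [σ]) =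
          supLang G Sc So (mySp G Sc So L) s *
          (G.w s σ * ∑ θ ∈ (ControlPatterns Sc).filter (fun θ => σ ∈ θ),
            mySp G Sc So L (proj So s) θ) := langOf_snoc _ s σ
      rw [hsnoc, ih, hSp_fsum]
      rcases eq_or_lt_of_le (L.nonneg s) with h0 | hpos
      · rw [← h0, hLzero s σ h0.symm]; ring
      · by_cases hσ : σ ∈ Sc
        · by_cases hw : 0 < G.w s σ
          · have hex : ∃ s', 0 < L.toFun s' ∧ proj So s' = proj So s ∧ 0 < G.w s' σ :=
              ⟨s, hpos, rfl, hw⟩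
            obtain ⟨hs', hp', hw'⟩ := hex.choose_spec
            have hob := hobs hex.choose s hs' hpos hp' σ hσ
            rw [PDES.lang_snoc, PDES.lang_snoc,
              mul_div_cancel_left₀ _ (hsupp _ hs').ne',
              mul_div_cancel_left₀ _ (hsupp s hpos).ne'] at hob
            have hr : L.toFun (s ++ [σ]) / L.toFun s =
                G.w s σ * (L.toFun (hex.choose ++ [σ]) / L.toFun hex.choose) / G.w hex.choose σ := by
              rw [eq_div_iff hw'.ne']
              linarith [hob]
            have h1 : L.toFun (s ++ [σ]) =
                L.toFun s * (L.toFun (s ++ [σ]) / L.toFun s) := by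
              field_simp
            rw [show myK G Sc So L (proj So s) σ =
                L.toFun (hex.choose ++ [σ]) / L.toFun hex.choose / G.w hex.choose σ from by
              rw [myK, if_pos hσ, dif_pos hex]]
            rw [h1, hr]
            ring
          · have hw0 : G.w s σ = 0 := le_antisymm (not_lt.1 hw) (PDES.w_nonneg G s σ)
            have hz : L.toFun (s ++ [σ]) = 0 := by
              have := hratio s hpos σ
              rw [hw0, div_le_iff₀ hpos, zero_mul] at this
              exact le_antisymm this (L.nonneg _)
            rw [hw0, hz]; ring
        · have hc := hctrl s hpos σ hσ
          rw [PDES.lang_snoc, mul_div_cancel_left₀ _ (hsupp s hpos).ne'] at hc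
          rw [show myK G Sc So L (proj So s) σ = 1 from by rw [myK, if_neg hσ], mul_one,
            ← hc]
          field_simp
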